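/- Every word of length n over a binary alphabet of the form 0^m 1 0^m 1 0^m contains Θ(m²) distinct abelian square factors; more precisely, the number of distinct factors of 0^m 1 0^m 1 0^m that are abelian squares is at least m²/4. -/
import Mathlib


/-- Abelian equivalence: same number of occurrences of each letter. -/
def abelEq {α : Type*} [DecidableEq α] (u v : List α) : Prop :=
  ∀ a, u.count a = v.count a

/-- An abelian square: a nonempty word of the form `u₁ u₂` with `u₁` and `u₂`
abelian equivalent. -/
def IsAbSquare {α : Type*} [DecidableEq α] (v : List α) : Prop :=
  v ≠ [] ∧ ∃ u₁ u₂ : List α, v = u₁ ++ u₂ ∧ abelEq u₁ u₂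

/-- The word `0^m 1 0^m 1 0^m` over the binary alphabet. -/
def w4 (m : ℕ) : List (Fin 2) :=
  List.replicate m 0 ++ [1] ++ List.replicate m 0 ++ [1] ++ List.replicate m 0

lemma rep_cancel : ∀ (a a' : ℕ) (t t' : List (Fin 2)),
    List.replicate a 0 ++ 1 :: t = List.replicate a' 0 ++ 1 :: t' → a = a' ∧ t = t' := by
  intro a
  induction a with
  | zero =>
    intro a' t t' h
    cases a' with
    | zero => simpa using h
    | succ n => simp [List.replicate_succ] at h
  | succ n ih =>
    intro a' t t' h
    cases a' with
    | zero => simp [List.replicate_succ] at h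
    | succ n' =>
      simp only [List.replicate_succ, List.cons_append, List.cons.injEq] at h
      obtain ⟨h1, h2⟩ := ih n' t t' h.2
      exact ⟨by omega, h2⟩

def gw (m a c : ℕ) : List (Fin 2) :=
  List.replicate a 0 ++ 1 :: (List.replicate m 0 ++ 1 :: List.replicate c 0)

lemma gw_inj (m a c a' c' : ℕ) (h : gw m a c = gw m a' c') : a = a' ∧ c = c' := by
  unfold gw at h
  obtain ⟨h1, h2⟩ := rep_cancel _ _ _ _ h
  obtain ⟨h3, h4⟩ := rep_cancel _ _ _ _ h2
  refine ⟨h1, ?_⟩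
  have := congrArg List.length h4
  simpa using this

lemma gw_infix (m a c : ℕ) (ha : a ≤ m) (hc : c ≤ m) : gw m a c <:+: w4 m := by
  refine ⟨List.replicate (m - a) 0, List.replicate (m - c) 0, ?_⟩
  have h1 : List.replicate (m - a) (0 : Fin 2) ++ List.replicate a 0 = List.replicate m 0 := by
    rw [← List.replicate_add]; congr 1; omega
  have h2 : List.replicate c (0 : Fin 2) ++ List.replicate (m - c) 0 = List.replicate m 0 := by
    rw [← List.replicate_add]; congr 1; omega
  simp only [gw, w4, List.append_assoc, List.cons_append, List.singleton_append, List.nil_append]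
  rw [← List.append_assoc, h1, h2]

lemma gw_absquare (m a c x : ℕ) (hx : x ≤ m) (hbal : a + x = (m - x) + c) :
    IsAbSquare (gw m a c) := by
  constructor
  · simp [gw]
  refine ⟨List.replicate a 0 ++ 1 :: List.replicate x 0,
          List.replicate (m - x) 0 ++ 1 :: List.replicate c 0, ?_, ?_⟩
  · have h1 : List.replicate x (0 : Fin 2) ++ List.replicate (m - x) 0 = List.replicate m 0 := by
      rw [← List.replicate_add]; congr 1; omega
    simp only [gw, List.append_assoc, List.cons_append]
    rw [← h1]
    simp only [List.cons.injEq, List.append_cancel_left_eq, true_and]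
    rw [List.append_assoc]
  · intro l
    fin_cases l <;>
      simp [List.count_append, List.count_cons, List.count_replicate] <;> omega

/-- The word `0^m 1 0^m 1 0^m` contains at least `m²/4` distinct abelian-square
factors (so a word of length `n` can contain `Θ(n²)` distinct abelian squares). -/
theorem stmt4 (m : ℕ) :
    m ^ 2 / 4 ≤ Set.ncard {v : List (Fin 2) | v <:+: w4 m ∧ IsAbSquare v} := by
  set k := m / 2 with hk
  set r := m % 2 with hr
  have hm : m = 2 * k + r := (Nat.div_add_mod m 2).symm ▸ by omega
  set S : Finset (ℕ × ℕ) := Finset.range (k + 1) ×ˢ Finset.range (k + 1) with hS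
  set f : ℕ × ℕ → List (Fin 2) := fun p => gw m (2 * p.1 + r) (2 * p.2) with hf
  have hr1 : r ≤ 1 := by omega
  -- the target set is finite
  have hfin : {v : List (Fin 2) | v <:+: w4 m ∧ IsAbSquare v}.Finite := by
    apply Set.Finite.subset (w4 m).sublists.toFinset.finite_toSet
    intro v hv
    exact Finset.mem_coe.mpr (List.mem_toFinset.mpr (List.mem_sublists.mpr hv.1.sublist))
  -- image is inside the target set
  have hsub : ↑(S.image f) ⊆ {v : List (Fin 2) | v <:+: w4 m ∧ IsAbSquare v} := by
    intro v hv
    obtain ⟨⟨i, j⟩, hp, rfl⟩ := Finset.mem_image.mp (Finset.mem_coe.mp hv)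
    rw [hS, Finset.mem_product, Finset.mem_range, Finset.mem_range] at hp
    obtain ⟨hi, hj⟩ := hp
    constructor
    · exact gw_infix m _ _ (by omega) (by omega)
    · exact gw_absquare m _ _ (k + j - i) (by omega) (by omega)
  have hinj : Set.InjOn f ↑S := by
    intro p hp q hq h
    obtain ⟨h1, h2⟩ := gw_inj _ _ _ _ _ h
    obtain ⟨i, j⟩ := p; obtain ⟨i', j'⟩ := q
    simp only [Prod.mk.injEq]
    constructor <;> omega
  have hcard : (S.image f).card = (k + 1) ^ 2 := by
    rw [Finset.card_image_of_injOn hinj, hS, Finset.card_product, Finset.card_range]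
    ring
  have h1 : m ^ 2 / 4 ≤ (k + 1) ^ 2 := by
    have hle : m ^ 2 ≤ 4 * (k + 1) ^ 2 := by nlinarith [hm, hr1]
    calc m ^ 2 / 4 ≤ 4 * (k + 1) ^ 2 / 4 := Nat.div_le_div_right hle
      _ = (k + 1) ^ 2 := Nat.mul_div_cancel_left _ (by norm_num)
  calc m ^ 2 / 4 ≤ (k + 1) ^ 2 := h1
    _ = (↑(S.image f) : Set (List (Fin 2))).ncard := by rw [Set.ncard_coe_finset, hcard]
    _ ≤ _ := Set.ncard_le_ncard hsub hfin
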